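/- If U is an n×n bistochastic matrix that is an extreme point of the set of bistochastic matrices, then every entry of U is 0 or 1 (i.e., U is a permutation matrix). -/

import Mathlib

def Bistochastic {n : ℕ} (U : Matrix (Fin n) (Fin n) ℝ) : Prop :=
  (∀ i j, 0 ≤ U i j) ∧ (∀ i, ∑ j, U i j = 1) ∧ (∀ j, ∑ i, U i j = 1)

theorem stmt_2 (n : ℕ) (U : Matrix (Fin n) (Fin n) ℝ) (hU : Bistochastic U)
    (hext : ∀ V W : Matrix (Fin n) (Fin n) ℝ,
      Bistochastic V → Bistochastic W → U = (2⁻¹ : ℝ) • (V + W) → V = W) :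
    ∀ i j, U i j = 0 ∨ U i j = 1 := by
  have hmem : U ∈ doublyStochastic ℝ (Fin n) :=
    mem_doublyStochastic_iff_sum.2 ⟨hU.1, hU.2.1, hU.2.2⟩
  have hbisto : ∀ M : Matrix (Fin n) (Fin n) ℝ,
      M ∈ doublyStochastic ℝ (Fin n) → Bistochastic M := fun M hM => by
    rw [mem_doublyStochastic_iff_sum] at hM
    exact ⟨hM.1, hM.2.1, hM.2.2⟩
  have hextp : U ∈ Set.extremePoints ℝ
      (doublyStochastic ℝ (Fin n) : Set (Matrix (Fin n) (Fin n) ℝ)) := by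
    refine ⟨hmem, fun y hy z hz hseg => ?_⟩
    obtain ⟨a, b, ha, hb, hab, hx⟩ := hseg
    set t := min a b with ht_def
    have ht : 0 < t := lt_min ha hb
    have hta : t ≤ a := min_le_left a b
    have htb : t ≤ b := min_le_right a b
    set V := U + t • (y - z) with hV
    set W := U - t • (y - z) with hW
    have hVeq : V = (a + t) • y + (b - t) • z := by
      rw [hV, ← hx]; module
    have hWeq : W = (a - t) • y + (b + t) • z := by
      rw [hW, ← hx]; module
    have hVmem : V ∈ doublyStochastic ℝ (Fin n) := by
      rw [hVeq]
      exact convex_doublyStochastic hy hz (by linarith) (by linarith) (by linarith)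
    have hWmem : W ∈ doublyStochastic ℝ (Fin n) := by
      rw [hWeq]
      exact convex_doublyStochastic hy hz (by linarith) (by linarith) (by linarith)
    have hVW : V = W := by
      refine hext V W (hbisto V hVmem) (hbisto W hWmem) ?_
      rw [hV, hW]; module
    have hyz : y = z := by
      have h2 : (2 * t) • (y - z) = 0 := by
        have := sub_eq_zero.2 hVW
        rw [hV, hW] at this
        have h3 : (t • (y - z)) + (t • (y - z)) = 0 := by
          have : U + t • (y - z) - (U - t • (y - z)) = 0 := this
          linear_combination (norm := module) this
        linear_combination (norm := module) h3
      have hne : (2 * t : ℝ) ≠ 0 := by positivity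
      have := smul_eq_zero.1 h2
      rcases this with h | h
      · exact absurd h hne
      · exact sub_eq_zero.1 h
    subst hyz
    have : U = y := by rw [← hx]; rw [← add_smul, hab, one_smul]
    exact this.symm
  rw [doublyStochastic_eq_convexHull_permMatrix] at hextp
  obtain ⟨σ, hσ⟩ := extremePoints_convexHull_subset hextp
  intro i j
  rw [← hσ]
  simp only [Equiv.Perm.permMatrix, PEquiv.toMatrix_apply]
  split <;> simp
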